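/- Let Q be a nondegenerate (-1)^k-symmetric bilinear form on a finite-dimensional real vector space V, N ∈ End(V) nilpotent with Q(Nu,v) = -Q(u,Nv), and let {M,Y,N} be a standard triple inside the Lie algebra of Q-skew endomorphisms. Then for each ℓ ≥ 0, the form Q_ℓ(u,v) = Q(u, N^ℓ v) restricted to the highest weight space P(ℓ) is nondegenerate. -/

import Mathlib

open Module Submodule

namespace QellAux

variable {V : Type*} [AddCommGroup V] [Module ℝ V]
variable {M Y N : Module.End ℝ V}

/-- `[Y, N^n] = -2n N^n`. -/
lemma YNpow (eYN : Y * N = N * Y - (2:ℝ) • N) (n : ℕ) :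
    Y * N ^ n = N ^ n * Y - ((2*n : ℝ)) • N ^ n := by
  induction n with
  | zero => simp
  | succ n ih =>
    calc Y * N ^ (n+1) = (Y * N ^ n) * N := by rw [pow_succ, ← mul_assoc]
    _ = (N ^ n * Y - (2*n:ℝ) • N ^ n) * N := by rw [ih]
    _ = N ^ n * (Y * N) - (2*n:ℝ) • (N ^ n * N) := by
          rw [sub_mul, mul_assoc, smul_mul_assoc]
    _ = N ^ n * (N * Y - (2:ℝ) • N) - (2*n:ℝ) • N ^ (n+1) := by rw [eYN, pow_succ]
    _ = N ^ (n+1) * Y - (2*(n+1:ℕ):ℝ) • N ^ (n+1) := by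
          rw [mul_sub, ← mul_assoc, ← pow_succ, mul_smul_comm, ← pow_succ]
          push_cast
          module

/-- `[Y, M^n] = 2n M^n`. -/
lemma YMpow (eYM : Y * M = M * Y + (2:ℝ) • M) (n : ℕ) :
    Y * M ^ n = M ^ n * Y + ((2*n : ℝ)) • M ^ n := by
  induction n with
  | zero => simp
  | succ n ih =>
    calc Y * M ^ (n+1) = (Y * M ^ n) * M := by rw [pow_succ, ← mul_assoc]
    _ = (M ^ n * Y + (2*n:ℝ) • M ^ n) * M := by rw [ih]
    _ = M ^ n * (Y * M) + (2*n:ℝ) • (M ^ n * M) := by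
          rw [add_mul, mul_assoc, smul_mul_assoc]
    _ = M ^ n * (M * Y + (2:ℝ) • M) + (2*n:ℝ) • M ^ (n+1) := by rw [eYM, pow_succ]
    _ = M ^ (n+1) * Y + (2*(n+1:ℕ):ℝ) • M ^ (n+1) := by
          rw [mul_add, ← mul_assoc, ← pow_succ, mul_smul_comm, ← pow_succ]
          push_cast
          module

/-- `[M, N^(n+1)] = (n+1) N^n Y - (n+1)n N^n`. -/
lemma MNpow (eYN : Y * N = N * Y - (2:ℝ) • N) (eMN : M * N = N * M + Y) (n : ℕ) :
    M * N ^ (n+1) = N ^ (n+1) * M + ((n+1:ℕ) : ℝ) • (N ^ n * Y)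
      - (((n+1)*n : ℕ) : ℝ) • N ^ n := by
  induction n with
  | zero => simpa using eMN
  | succ n ih =>
    calc M * N ^ (n+2) = (M * N ^ (n+1)) * N := by rw [pow_succ, ← mul_assoc]
    _ = (N ^ (n+1) * M + ((n+1:ℕ):ℝ) • (N ^ n * Y) - (((n+1)*n:ℕ):ℝ) • N ^ n) * N := by
          rw [ih]
    _ = N ^ (n+1) * (M * N) + ((n+1:ℕ):ℝ) • (N ^ n * (Y * N))
          - (((n+1)*n:ℕ):ℝ) • (N ^ n * N) := by
          rw [sub_mul, add_mul, mul_assoc, smul_mul_assoc, smul_mul_assoc, mul_assoc]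
    _ = N ^ (n+1) * (N * M + Y) + ((n+1:ℕ):ℝ) • (N ^ n * (N * Y - (2:ℝ) • N))
          - (((n+1)*n:ℕ):ℝ) • N ^ (n+1) := by rw [eMN, eYN, pow_succ]
    _ = N ^ (n+2) * M + ((n+2:ℕ):ℝ) • (N ^ (n+1) * Y) - (((n+2)*(n+1):ℕ):ℝ) • N ^ (n+1) := by
          rw [mul_add, mul_sub, ← mul_assoc, ← mul_assoc, ← pow_succ, mul_smul_comm,
            ← pow_succ]
          push_cast
          module


/-- An endomorphism which is an `ad Y` eigenvector (for nonzero eigenvalue multiples)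
is nilpotent. -/
lemma isNilpotent_aux [FiniteDimensional ℝ V] (Y A : Module.End ℝ V) (c : ℝ) (hc : c ≠ 0)
    (h : ∀ n : ℕ, Y * A ^ n - A ^ n * Y = (c * n) • A ^ n) : ∃ n : ℕ, A ^ n = 0 := by
  by_contra hcon
  push_neg at hcon
  set D := finrank ℝ (Module.End ℝ V) with hD
  have inst : FiniteDimensional ℝ (Module.End ℝ V) := by infer_instance
  set ad : Module.End ℝ (Module.End ℝ V) :=
    LinearMap.mulLeft ℝ Y - LinearMap.mulRight ℝ Y with had
  have hadapp : ∀ B : Module.End ℝ V, ad B = Y * B - B * Y := fun B => rfl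
  have hev : ∀ i : Fin (D+1), ad.HasEigenvector (c * i) (A ^ (i:ℕ)) := by
    intro i
    constructor
    · rw [Module.End.mem_eigenspace_iff, hadapp]
      exact h i
    · exact hcon i
  have hinj : Function.Injective (fun i : Fin (D+1) => c * (i:ℕ)) := by
    intro i j hij
    simp only [mul_eq_mul_left_iff, hc, or_false, Nat.cast_inj] at hij
    exact Fin.ext hij
  have hli : LinearIndependent ℝ (fun i : Fin (D+1) => A ^ (i:ℕ)) :=
    ad.eigenvectors_linearIndependent' _ hinj _ hev
  have := hli.fintype_card_le_finrank
  simp [hD] at this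


section applied
variable (eYM : Y * M = M * Y + (2:ℝ) • M)
variable (eYN : Y * N = N * Y - (2:ℝ) • N)
variable (eMN : M * N = N * M + Y)

include eYN in
/-- Weight of `N^n p`. -/
lemma F1 {p : V} {μ : ℝ} (hYp : Y p = μ • p) (n : ℕ) :
    Y ((N ^ n) p) = (μ - 2*n) • (N ^ n) p := by
  have := congrArg (fun A : Module.End ℝ V => A p) (YNpow eYN n)
  simp only [Module.End.mul_apply, LinearMap.sub_apply, LinearMap.smul_apply] at this
  rw [this, hYp, map_smul, sub_smul]

include eYN eMN in
/-- `M` applied along the string of a primitive vector. -/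
lemma F2 {p : V} {μ : ℝ} (hMp : M p = 0) (hYp : Y p = μ • p) (n : ℕ) :
    M ((N ^ (n+1)) p) = (((n:ℝ)+1) * (μ - n)) • (N ^ n) p := by
  have := congrArg (fun A : Module.End ℝ V => A p) (MNpow eYN eMN n)
  simp only [Module.End.mul_apply, LinearMap.sub_apply, LinearMap.add_apply,
    LinearMap.smul_apply] at this
  rw [this, hMp, map_zero, hYp, map_smul, smul_smul]
  push_cast
  rw [zero_add, ← sub_smul]
  congr 1
  ring

include eYN eMN in
/-- The string of a primitive vector of weight `m` has length exactly `m+1`. -/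
lemma string_facts [FiniteDimensional ℝ V] {p : V} (hp : p ≠ 0) {m : ℕ}
    (hMp : M p = 0) (hYp : Y p = (m:ℝ) • p) :
    (N ^ (m+1)) p = 0 ∧ ∀ i ≤ m, (N ^ i) p ≠ 0 := by
  have hNnil : ∃ n : ℕ, N ^ n = 0 := by
    apply isNilpotent_aux Y N (-2) (by norm_num)
    intro n
    rw [YNpow eYN n]
    push_cast
    module
  have hex : ∃ n : ℕ, (N ^ n) p = 0 := by
    obtain ⟨n, hn⟩ := hNnil
    exact ⟨n, by rw [hn]; rfl⟩
  classical
  let n₀ := Nat.find hex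
  have hn₀ : (N ^ n₀) p = 0 := Nat.find_spec hex
  have hmin : ∀ i < n₀, (N ^ i) p ≠ 0 := fun i hi => Nat.find_min hex hi
  have hn₀pos : n₀ ≠ 0 := by
    intro h0
    apply hp
    have := hn₀
    rw [h0] at this
    simpa using this
  obtain ⟨n, hn⟩ : ∃ n, n₀ = n + 1 := ⟨n₀ - 1, by omega⟩
  have hn₀' : (N ^ (n+1)) p = 0 := by rw [← hn]; exact hn₀
  have h0 : (0:V) = (((n:ℝ)+1) * ((m:ℝ) - n)) • (N ^ n) p := by
    rw [← F2 eYN eMN hMp hYp n, hn₀', map_zero]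
  have hne : (N ^ n) p ≠ 0 := hmin n (by omega)
  have hsc : (((n:ℝ)+1) * ((m:ℝ) - n)) = 0 := by
    by_contra hs
    exact hne (by
      have := h0.symm
      rwa [smul_eq_zero, or_iff_right hs] at this)
  have hmn : m = n := by
    have h1 : ((n:ℝ)+1) ≠ 0 := by positivity
    have : (m:ℝ) = (n:ℝ) := by
      rcases mul_eq_zero.mp hsc with h | h
      · exact absurd h h1
      · linarith
    exact_mod_cast this
  subst hmn
  exact ⟨hn₀', fun i hi => hmin i (by omega)⟩

include eYM eYN eMN in
/-- Any nonzero module contains a primitive vector of natural weight. -/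
lemma exists_primitive [FiniteDimensional ℝ V] [Nontrivial V] :
    ∃ (m : ℕ) (p : V), p ≠ 0 ∧ M p = 0 ∧ Y p = (m:ℝ) • p := by
  classical
  -- M is nilpotent, so its kernel is nonzero
  have hMnil : ∃ n : ℕ, M ^ n = 0 := by
    apply isNilpotent_aux Y M 2 (by norm_num)
    intro n
    rw [YMpow eYM n]
    push_cast
    module
  obtain ⟨x₀, hx₀⟩ := exists_ne (0 : V)
  have hkerM : ∃ x : V, x ≠ 0 ∧ M x = 0 := by
    obtain ⟨D, hD⟩ := hMnil
    have hexm : ∃ n : ℕ, (M ^ n) x₀ = 0 := ⟨D, by rw [hD]; rfl⟩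
    let n₀ := Nat.find hexm
    have hn₀ : (M ^ n₀) x₀ = 0 := Nat.find_spec hexm
    have hn₀pos : n₀ ≠ 0 := by
      intro h0
      apply hx₀
      have := hn₀
      rw [h0] at this
      simpa using this
    obtain ⟨n, hn⟩ : ∃ n, n₀ = n + 1 := ⟨n₀ - 1, by omega⟩
    refine ⟨(M ^ n) x₀, Nat.find_min hexm (by omega), ?_⟩
    have : (M ^ (n+1)) x₀ = 0 := by rw [← hn]; exact hn₀
    rw [pow_succ'] at this
    exact this
  -- N nilpotent
  have hNnil : ∃ n : ℕ, N ^ n = 0 := by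
    apply isNilpotent_aux Y N (-2) (by norm_num)
    intro n
    rw [YNpow eYN n]
    push_cast
    module
  obtain ⟨x, hx, hMx⟩ := hkerM
  -- the kernel of M is Y-invariant
  have hKY : ∀ y : V, M y = 0 → M (Y y) = 0 := by
    intro y hy
    have := congrArg (fun A : Module.End ℝ V => A y) eYM
    simp only [Module.End.mul_apply, LinearMap.add_apply, LinearMap.smul_apply] at this
    -- this : Y (M y) = M (Y y) + 2 • M y
    rw [hy, smul_zero, add_zero, map_zero] at this
    exact this.symm
  -- longest string length in ker M
  obtain ⟨D, hD⟩ := hNnil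
  have hPex : ∃ n : ℕ, ∀ y : V, M y = 0 → (N ^ n) y = 0 := ⟨D, fun y _ => by rw [hD]; rfl⟩
  let n₀ := Nat.find hPex
  have hP : ∀ y : V, M y = 0 → (N ^ n₀) y = 0 := Nat.find_spec hPex
  have hn₀pos : n₀ ≠ 0 := by
    intro h0
    apply hx
    have := hP x hMx
    rw [h0] at this
    simpa using this
  obtain ⟨j, hj⟩ : ∃ j, n₀ = j + 1 := ⟨n₀ - 1, by omega⟩
  have hmax : ∃ y : V, M y = 0 ∧ (N ^ j) y ≠ 0 := by
    have := Nat.find_min hPex (by omega : j < n₀)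
    push_neg at this
    obtain ⟨y, hy⟩ := this
    exact ⟨y, by tauto, by tauto⟩
  -- N^j (Y - j) y = 0 for all y in ker M
  have hkey : ∀ y : V, M y = 0 → (N ^ j) (Y y - (j:ℝ) • y) = 0 := by
    intro y hy
    have hz : (N ^ (j+1)) y = 0 := by rw [← hj]; exact hP y hy
    have := congrArg (fun A : Module.End ℝ V => A y) (MNpow eYN eMN j)
    simp only [Module.End.mul_apply, LinearMap.sub_apply, LinearMap.add_apply,
      LinearMap.smul_apply] at this
    rw [hz, map_zero, hy, map_zero] at this
    -- 0 = 0 + (j+1) • N^j (Y y) - (j+1)*j • N^j y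
    have h2 : (((j:ℕ)+1:ℕ):ℝ) • (N ^ j) (Y y) = (((j+1)*j : ℕ):ℝ) • (N ^ j) y := by
      rw [zero_add] at this
      exact sub_eq_zero.mp this.symm
    have h3 : (N ^ j) (Y y) = (j:ℝ) • (N ^ j) y := by
      have hc : ((j:ℝ)+1) ≠ 0 := by positivity
      push_cast at h2
      have h4 := congrArg (fun v : V => ((j:ℝ)+1)⁻¹ • v) h2
      simp only [smul_smul] at h4
      rw [inv_mul_cancel₀ hc, one_smul] at h4
      rw [h4]
      congr 1
      field_simp
    rw [map_sub, map_smul, h3, sub_self]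
  -- restrict Y - j to ker M
  have hres : ∀ x ∈ LinearMap.ker M, (Y - (j:ℝ) • (1 : Module.End ℝ V)) x ∈ LinearMap.ker M := by
    intro x hx
    rw [LinearMap.mem_ker] at hx ⊢
    rw [LinearMap.sub_apply, LinearMap.smul_apply, Module.End.one_apply, map_sub, map_smul,
      hKY x hx, hx, smul_zero, sub_self]
  set g : LinearMap.ker M →ₗ[ℝ] LinearMap.ker M :=
    (Y - (j:ℝ) • (1 : Module.End ℝ V)).restrict hres with hg
  have hgcoe : ∀ w : LinearMap.ker M, (g w : V) = Y (w : V) - (j:ℝ) • (w : V) := by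
    intro w
    simp [hg, LinearMap.restrict_apply]
  have hgnotsurj : ¬ Function.Surjective g := by
    intro hsurj
    obtain ⟨y, hyM, hyN⟩ := hmax
    obtain ⟨w, hw⟩ := hsurj ⟨y, LinearMap.mem_ker.mpr hyM⟩
    apply hyN
    have hcoe : y = Y (w : V) - (j:ℝ) • (w : V) := by
      rw [← hgcoe w, hw]
    rw [hcoe]
    exact hkey (w : V) (LinearMap.mem_ker.mp w.2)
  have hgnotinj : ¬ Function.Injective g := by
    intro hinj
    exact hgnotsurj ((LinearMap.injective_iff_surjective).mp hinj)
  have hker : LinearMap.ker g ≠ ⊥ := by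
    intro h0
    exact hgnotinj (LinearMap.ker_eq_bot.mp h0)
  obtain ⟨w, hwker, hw0⟩ := Submodule.ne_bot_iff _ |>.mp hker
  refine ⟨j, (w : V), ?_, LinearMap.mem_ker.mp w.2, ?_⟩
  · simpa using hw0
  · have := hgcoe w
    rw [LinearMap.mem_ker.mp hwker] at this
    have h0 : Y (w : V) - (j:ℝ) • (w : V) = 0 := by
      simpa using this.symm
    have := sub_eq_zero.mp h0
    exact this


include eYM eYN eMN in
lemma CasM : ((2:ℝ)•(M*N) + (2:ℝ)•(N*M) + Y*Y) * M = M * ((2:ℝ)•(M*N) + (2:ℝ)•(N*M) + Y*Y) := by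
  have hMMN : M*(M*N) = N*(M*M) + (2:ℝ)•(M*Y) + (2:ℝ)•M := by
    calc M*(M*N) = M*(N*M + Y) := by rw [eMN]
    _ = (M*N)*M + M*Y := by rw [mul_add, ← mul_assoc]
    _ = (N*M + Y)*M + M*Y := by rw [eMN]
    _ = N*(M*M) + (M*Y + (2:ℝ)•M) + M*Y := by rw [add_mul, mul_assoc, eYM]
    _ = N*(M*M) + (2:ℝ)•(M*Y) + (2:ℝ)•M := by module
  have hYYM : Y*(Y*M) = M*(Y*Y) + (4:ℝ)•(M*Y) + (4:ℝ)•M := by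
    calc Y*(Y*M) = Y*(M*Y + (2:ℝ)•M) := by rw [eYM]
    _ = (Y*M)*Y + (2:ℝ)•(Y*M) := by rw [mul_add, ← mul_assoc, mul_smul_comm]
    _ = (M*Y + (2:ℝ)•M)*Y + (2:ℝ)•(M*Y + (2:ℝ)•M) := by rw [eYM]
    _ = M*(Y*Y) + (2:ℝ)•(M*Y) + ((2:ℝ)•(M*Y) + (4:ℝ)•M) := by
          rw [add_mul, mul_assoc, smul_mul_assoc]
          module
    _ = M*(Y*Y) + (4:ℝ)•(M*Y) + (4:ℝ)•M := by module
  simp only [mul_add, add_mul, mul_smul_comm, smul_mul_assoc, mul_assoc]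
  rw [hMMN, hYYM]
  module

include eYM eYN eMN in
lemma CasN : ((2:ℝ)•(M*N) + (2:ℝ)•(N*M) + Y*Y) * N = N * ((2:ℝ)•(M*N) + (2:ℝ)•(N*M) + Y*Y) := by
  have hMNN : M*(N*N) = N*(N*M) + (2:ℝ)•(N*Y) - (2:ℝ)•N := by
    calc M*(N*N) = (M*N)*N := by rw [mul_assoc]
    _ = (N*M + Y)*N := by rw [eMN]
    _ = N*(M*N) + Y*N := by rw [add_mul, mul_assoc]
    _ = N*(N*M + Y) + (N*Y - (2:ℝ)•N) := by rw [eMN, eYN]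
    _ = N*(N*M) + N*Y + (N*Y - (2:ℝ)•N) := by rw [mul_add]
    _ = N*(N*M) + (2:ℝ)•(N*Y) - (2:ℝ)•N := by module
  have hYYN : Y*(Y*N) = N*(Y*Y) - (4:ℝ)•(N*Y) + (4:ℝ)•N := by
    calc Y*(Y*N) = Y*(N*Y - (2:ℝ)•N) := by rw [eYN]
    _ = (Y*N)*Y - (2:ℝ)•(Y*N) := by rw [mul_sub, ← mul_assoc, mul_smul_comm]
    _ = (N*Y - (2:ℝ)•N)*Y - (2:ℝ)•(N*Y - (2:ℝ)•N) := by rw [eYN]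
    _ = N*(Y*Y) - (2:ℝ)•(N*Y) - ((2:ℝ)•(N*Y) - (4:ℝ)•N) := by
          rw [sub_mul, mul_assoc, smul_mul_assoc]
          module
    _ = N*(Y*Y) - (4:ℝ)•(N*Y) + (4:ℝ)•N := by module
  simp only [mul_add, add_mul, mul_smul_comm, smul_mul_assoc, mul_assoc]
  rw [hMNN, hYYN]
  module

include eYM eYN eMN in
lemma CasY : ((2:ℝ)•(M*N) + (2:ℝ)•(N*M) + Y*Y) * Y = Y * ((2:ℝ)•(M*N) + (2:ℝ)•(N*M) + Y*Y) := by
  have hYMN : Y*(M*N) = M*(N*Y) := by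
    calc Y*(M*N) = (Y*M)*N := by rw [mul_assoc]
    _ = (M*Y + (2:ℝ)•M)*N := by rw [eYM]
    _ = M*(Y*N) + (2:ℝ)•(M*N) := by rw [add_mul, mul_assoc, smul_mul_assoc]
    _ = M*(N*Y) - (2:ℝ)•(M*N) + (2:ℝ)•(M*N) := by rw [eYN, mul_sub, mul_smul_comm]
    _ = M*(N*Y) := by module
  have hYNM : Y*(N*M) = N*(M*Y) := by
    calc Y*(N*M) = (Y*N)*M := by rw [mul_assoc]
    _ = (N*Y - (2:ℝ)•N)*M := by rw [eYN]
    _ = N*(Y*M) - (2:ℝ)•(N*M) := by rw [sub_mul, mul_assoc, smul_mul_assoc]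
    _ = N*(M*Y) + (2:ℝ)•(N*M) - (2:ℝ)•(N*M) := by rw [eYM, mul_add, mul_smul_comm]
    _ = N*(M*Y) := by module
  simp only [mul_add, add_mul, mul_smul_comm, smul_mul_assoc, mul_assoc]
  rw [hYMN, hYNM]

section stringS
variable [FiniteDimensional ℝ V]

/-- The string submodule generated by a primitive vector. -/
def stringS (N : Module.End ℝ V) (p : V) (m : ℕ) : Submodule ℝ V :=
  Submodule.span ℝ (Set.range fun i : Fin (m+1) => (N ^ (i:ℕ)) p)

include eYN eMN in
lemma stringS_mem_pow {p : V} (hp : p ≠ 0) {m : ℕ} (hMp : M p = 0) (hYp : Y p = (m:ℝ) • p)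
    (n : ℕ) : (N ^ n) p ∈ stringS N p m := by
  by_cases hn : n ≤ m
  · exact subset_span ⟨⟨n, by omega⟩, rfl⟩
  · obtain ⟨a, rfl⟩ : ∃ a, n = a + (m+1) := ⟨n - (m+1), by omega⟩
    have h0 : (N ^ (a + (m+1))) p = 0 := by
      rw [pow_add, Module.End.mul_apply, (string_facts eYN eMN hp hMp hYp).1, map_zero]
    rw [h0]
    exact zero_mem _

include eYN eMN in
lemma stringS_comap_N {p : V} (hp : p ≠ 0) {m : ℕ} (hMp : M p = 0) (hYp : Y p = (m:ℝ) • p) :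
    stringS N p m ≤ (stringS N p m).comap N := by
  rw [stringS, span_le]
  rintro _ ⟨i, rfl⟩
  simp only [SetLike.mem_coe, mem_comap]
  have : N ((N ^ (i:ℕ)) p) = (N ^ ((i:ℕ)+1)) p := by rw [pow_succ', Module.End.mul_apply]
  rw [this]
  exact stringS_mem_pow eYN eMN hp hMp hYp _

include eYN eMN in
lemma stringS_comap_Y {p : V} (hp : p ≠ 0) {m : ℕ} (hMp : M p = 0) (hYp : Y p = (m:ℝ) • p) :
    stringS N p m ≤ (stringS N p m).comap Y := by
  rw [stringS, span_le]
  rintro _ ⟨i, rfl⟩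
  simp only [SetLike.mem_coe, mem_comap]
  rw [F1 eYN hYp]
  exact smul_mem _ _ (stringS_mem_pow eYN eMN hp hMp hYp _)

include eYN eMN in
lemma stringS_comap_M {p : V} (hp : p ≠ 0) {m : ℕ} (hMp : M p = 0) (hYp : Y p = (m:ℝ) • p) :
    stringS N p m ≤ (stringS N p m).comap M := by
  rw [stringS, span_le]
  rintro _ ⟨i, rfl⟩
  simp only [SetLike.mem_coe, mem_comap]
  rcases Nat.eq_zero_or_eq_succ_pred (i:ℕ) with h0 | hsucc
  · rw [h0]
    simp only [pow_zero, Module.End.one_apply, hMp]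
    exact zero_mem _
  · rw [hsucc, F2 eYN eMN hMp hYp]
    exact smul_mem _ _ (stringS_mem_pow eYN eMN hp hMp hYp _)

include eYN eMN in
lemma stringS_pow_zero {p : V} (hp : p ≠ 0) {m : ℕ} (hMp : M p = 0) (hYp : Y p = (m:ℝ) • p) :
    ∀ s ∈ stringS N p m, (N ^ (m+1)) s = 0 := by
  have hle : stringS N p m ≤ LinearMap.ker (N ^ (m+1)) := by
    rw [stringS, span_le]
    rintro _ ⟨i, rfl⟩
    simp only [SetLike.mem_coe, LinearMap.mem_ker]
    rw [← Module.End.mul_apply, ← pow_add]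
    have : m + 1 + (i:ℕ) = (i:ℕ) + (m+1) := by omega
    rw [this, pow_add, Module.End.mul_apply, (string_facts eYN eMN hp hMp hYp).1, map_zero]
  exact fun s hs => LinearMap.mem_ker.mp (hle hs)

include eYN eMN in
lemma stringS_indep {p : V} (hp : p ≠ 0) {m : ℕ} (hMp : M p = 0) (hYp : Y p = (m:ℝ) • p) :
    LinearIndependent ℝ (fun i : Fin (m+1) => (N ^ (i:ℕ)) p) := by
  apply Y.eigenvectors_linearIndependent' (fun i : Fin (m+1) => (m:ℝ) - 2*(i:ℕ))
  · intro i j hij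
    have : ((i:ℕ):ℝ) = ((j:ℕ):ℝ) := by dsimp at hij; linarith
    have : (i:ℕ) = (j:ℕ) := by exact_mod_cast this
    exact Fin.ext this
  · intro i
    constructor
    · rw [Module.End.mem_eigenspace_iff]
      exact F1 eYN hYp _
    · exact (string_facts eYN eMN hp hMp hYp).2 _ (Nat.lt_succ_iff.mp i.isLt)

include eYN eMN in
/-- An eigenvector in `S` whose eigenvalue is not among the string weights vanishes. -/
lemma stringS_eig_zero {p : V} (hp : p ≠ 0) {m : ℕ} (hMp : M p = 0) (hYp : Y p = (m:ℝ) • p)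
    {z : V} (hz : z ∈ stringS N p m) {lam : ℝ} (hYz : Y z = lam • z)
    (hlam : ∀ i : Fin (m+1), lam ≠ (m:ℝ) - 2*(i:ℕ)) : z = 0 := by
  obtain ⟨a, ha⟩ := (mem_span_range_iff_exists_fun ℝ).mp hz
  have h3 : Y z = ∑ i : Fin (m+1), (a i * ((m:ℝ) - 2*(i:ℕ))) • (N ^ (i:ℕ)) p := by
    rw [← ha, map_sum]
    refine Finset.sum_congr rfl fun i _ => ?_
    rw [map_smul, F1 eYN hYp, smul_smul]
  have h4 : lam • z = ∑ i : Fin (m+1), (lam * a i) • (N ^ (i:ℕ)) p := by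
    rw [← ha, Finset.smul_sum]
    exact Finset.sum_congr rfl fun i _ => by rw [smul_smul]
  have h1 : ∑ i : Fin (m+1), (a i * (((m:ℝ) - 2*(i:ℕ)) - lam)) • (N ^ (i:ℕ)) p = 0 := by
    have : ∑ i : Fin (m+1), (a i * (((m:ℝ) - 2*(i:ℕ)) - lam)) • (N ^ (i:ℕ)) p
        = Y z - lam • z := by
      rw [h3, h4, ← Finset.sum_sub_distrib]
      refine Finset.sum_congr rfl fun i _ => ?_
      rw [← sub_smul]
      congr 1
      ring
    rw [this, hYz, sub_self]
  have h5 := Fintype.linearIndependent_iff.mp (stringS_indep eYN eMN hp hMp hYp) _ h1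
  have h6 : ∀ i : Fin (m+1), a i = 0 := by
    intro i
    have := h5 i
    rcases mul_eq_zero.mp this with h | h
    · exact h
    · exact absurd (by linarith [sub_eq_zero.mp h] : lam = (m:ℝ) - 2*(i:ℕ)) (hlam i)
  rw [← ha]
  exact Finset.sum_eq_zero fun i _ => by rw [h6 i, zero_smul]

include eYN eMN in
/-- The Casimir acts on the string by the scalar `m^2 + 2m`. -/
lemma stringS_cas {p : V} (hp : p ≠ 0) {m : ℕ} (hMp : M p = 0) (hYp : Y p = (m:ℝ) • p) :
    ∀ s ∈ stringS N p m,
      ((2:ℝ)•(M*N) + (2:ℝ)•(N*M) + Y*Y) s = ((m:ℝ)^2 + 2*m) • s := by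
  have happ : ∀ x : V, ((2:ℝ)•(M*N) + (2:ℝ)•(N*M) + Y*Y) x
      = (2:ℝ) • M (N x) + (2:ℝ) • N (M x) + Y (Y x) := by
    intro x
    simp [LinearMap.add_apply, LinearMap.smul_apply, Module.End.mul_apply]
  have hpow : ∀ n : ℕ, ((2:ℝ)•(M*N) + (2:ℝ)•(N*M) + Y*Y) ((N ^ n) p)
      = ((m:ℝ)^2 + 2*m) • (N ^ n) p := by
    intro n
    rw [happ]
    have hNx : N ((N ^ n) p) = (N ^ (n+1)) p := by rw [pow_succ', Module.End.mul_apply]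
    cases n with
    | zero =>
      simp only [pow_zero, Module.End.one_apply] at hNx ⊢
      rw [hNx, F2 eYN eMN hMp hYp 0, hMp, map_zero, smul_zero, hYp, map_smul, hYp]
      simp only [pow_zero, Module.End.one_apply, smul_smul]
      rw [add_zero, ← add_smul]
      congr 1
      push_cast
      ring
    | succ n =>
      have hNx' : N ((N ^ n) p) = (N ^ (n+1)) p := by rw [pow_succ', Module.End.mul_apply]
      rw [hNx, F2 eYN eMN hMp hYp (n+1), F2 eYN eMN hMp hYp n, map_smul, hNx',
        F1 eYN hYp (n+1), map_smul, F1 eYN hYp (n+1)]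
      simp only [smul_smul]
      rw [← add_smul, ← add_smul]
      congr 1
      push_cast
      ring
  intro s hs
  have hle : stringS N p m ≤
      LinearMap.ker (((2:ℝ)•(M*N) + (2:ℝ)•(N*M) + Y*Y) - ((m:ℝ)^2 + 2*m) • 1) := by
    rw [stringS, span_le]
    rintro _ ⟨i, rfl⟩
    simp only [SetLike.mem_coe, LinearMap.mem_ker, LinearMap.sub_apply, LinearMap.smul_apply,
      Module.End.one_apply]
    rw [hpow, sub_self]
  have := LinearMap.mem_ker.mp (hle hs)
  rw [LinearMap.sub_apply, LinearMap.smul_apply, Module.End.one_apply, sub_eq_zero] at this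
  exact this

include eYM eYN eMN in
/-- A primitive vector modulo a string lifts to a genuine primitive vector. -/
lemma lift_primitive {p : V} (hp : p ≠ 0) {m : ℕ} (hMp : M p = 0) (hYp : Y p = (m:ℝ) • p)
    (m' : ℕ) (p₀ : V)
    (h0 : M p₀ ∈ stringS N p m) (h1 : Y p₀ - (m':ℝ) • p₀ ∈ stringS N p m)
    (h2 : (N ^ (m'+1)) p₀ ∈ stringS N p m) :
    ∃ q : V, M q = 0 ∧ Y q = (m':ℝ) • q ∧ q - p₀ ∈ stringS N p m := by
  classical
  have hSN := stringS_comap_N eYN eMN hp hMp hYp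
  have hSY := stringS_comap_Y eYN eMN hp hMp hYp
  have hSM := stringS_comap_M eYN eMN hp hMp hYp
  have hcas := stringS_cas eYN eMN hp hMp hYp
  by_cases hmm : m' = m
  · -- m' = m : direct computation
    subst hmm
    obtain ⟨b, hb⟩ := (mem_span_range_iff_exists_fun ℝ).mp h1
    set cf : Fin (m'+1) → ℝ := fun i => if i = 0 then 0 else b i / (2*(i:ℕ)) with hcf
    set p₁ : V := p₀ + ∑ i : Fin (m'+1), cf i • (N ^ (i:ℕ)) p with hp₁
    have hp₁S : p₁ - p₀ ∈ stringS N p m' := by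
      rw [hp₁, add_sub_cancel_left]
      exact Submodule.sum_mem _ fun i _ => smul_mem _ _ (subset_span ⟨i, rfl⟩)
    have hMp₁S : M p₁ ∈ stringS N p m' := by
      have : M p₁ = M p₀ + M (p₁ - p₀) := by rw [map_sub]; abel
      rw [this]
      exact add_mem h0 (mem_comap.mp (hSM hp₁S))
    -- Y p₁ - m' p₁ = b 0 • p
    have hYp₁ : Y p₁ - (m':ℝ) • p₁ = b 0 • p := by
      have hterm : ∀ i : Fin (m'+1),
          Y (cf i • (N^(i:ℕ)) p) = (m':ℝ) • (cf i • (N^(i:ℕ)) p)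
            + (cf i * (-2*(i:ℕ))) • (N^(i:ℕ)) p := by
        intro i
        rw [map_smul, F1 eYN hYp, smul_smul, smul_smul, ← add_smul]
        congr 1
        ring
      have h₁ : Y p₁ - (m':ℝ) • p₁ = (Y p₀ - (m':ℝ) • p₀)
          + ∑ i : Fin (m'+1), (cf i * (-2*(i:ℕ))) • (N^(i:ℕ)) p := by
        rw [hp₁, map_add, map_sum, smul_add, Finset.smul_sum]
        rw [Finset.sum_congr rfl (fun i _ => hterm i), Finset.sum_add_distrib]
        abel
      rw [h₁, ← hb, ← Finset.sum_add_distrib]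
      have hterm2 : ∀ i : Fin (m'+1),
          b i • (N^(i:ℕ)) p + (cf i * (-2*(i:ℕ))) • (N^(i:ℕ)) p
            = if i = 0 then b i • (N^(i:ℕ)) p else 0 := by
        intro i
        rw [← add_smul]
        by_cases hi : i = 0
        · rw [if_pos hi, hcf]
          simp only [if_pos hi, hi]
          norm_num
        · rw [if_neg hi, hcf]
          simp only [if_neg hi]
          have hi' : ((i:ℕ):ℝ) ≠ 0 := by
            have : (i:ℕ) ≠ 0 := fun hc => hi (Fin.ext (by simpa using hc))
            exact_mod_cast this
          have : b i + b i / (2*(i:ℕ)) * (-2*(i:ℕ)) = 0 := by field_simp; ring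
          rw [this, zero_smul]
      rw [Finset.sum_congr rfl (fun i _ => hterm2 i), Finset.sum_ite_eq' Finset.univ 0]
      simp
    -- N^(m'+1) p₁ ∈ S and is an eigenvector of eigenvalue -m'-2, hence zero
    have hzS : (N^(m'+1)) p₁ ∈ stringS N p m' := by
      have : (N^(m'+1)) p₁ = (N^(m'+1)) p₀ + (N^(m'+1)) (p₁ - p₀) := by rw [map_sub]; abel
      rw [this, stringS_pow_zero eYN eMN hp hMp hYp _ hp₁S, add_zero]
      exact h2
    have hYp₁' : Y p₁ = (m':ℝ) • p₁ + b 0 • p := by rw [← hYp₁]; abel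
    have hYz : Y ((N^(m'+1)) p₁) = (-(m':ℝ)-2) • (N^(m'+1)) p₁ := by
      have := congrArg (fun A : Module.End ℝ V => A p₁) (YNpow eYN (m'+1))
      simp only [Module.End.mul_apply, LinearMap.sub_apply, LinearMap.smul_apply] at this
      rw [this, hYp₁', map_add, map_smul, map_smul,
        (string_facts eYN eMN hp hMp hYp).1, smul_zero, add_zero]
      push_cast
      module
    have hz0 : (N^(m'+1)) p₁ = 0 := by
      apply stringS_eig_zero eYN eMN hp hMp hYp hzS hYz
      intro i heq
      have hi : ((i:ℕ):ℝ) ≤ (m':ℝ) := by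
        exact_mod_cast Nat.lt_succ_iff.mp i.isLt
      linarith
    -- conclude b 0 = 0
    have hb0 : b 0 = 0 := by
      have hkey := congrArg (fun A : Module.End ℝ V => A p₁) (MNpow eYN eMN m')
      simp only [Module.End.mul_apply, LinearMap.sub_apply, LinearMap.add_apply,
        LinearMap.smul_apply] at hkey
      rw [hz0, map_zero, stringS_pow_zero eYN eMN hp hMp hYp _ hMp₁S, hYp₁',
        map_add, map_smul, map_smul] at hkey
      have hNm : (N ^ (m'+1)) p = 0 := (string_facts eYN eMN hp hMp hYp).1
      have h0' : (0:V) = (((m'+1:ℕ):ℝ) * b 0) • (N ^ m') p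
          + (((m'+1:ℕ):ℝ) * (m':ℝ) - (((m'+1)*m' : ℕ):ℝ)) • (N ^ m') p₁ := by
        rw [hkey]
        module
      have h1' : (((m'+1:ℕ):ℝ) * (m':ℝ) - (((m'+1)*m' : ℕ):ℝ)) = 0 := by
        push_cast
        ring
      rw [h1', zero_smul, add_zero] at h0'
      have hNmp : (N ^ m') p ≠ 0 := (string_facts eYN eMN hp hMp hYp).2 m' le_rfl
      have := (smul_eq_zero.mp h0'.symm).resolve_right hNmp
      have hm1 : ((m'+1:ℕ):ℝ) ≠ 0 := by positivity
      rcases mul_eq_zero.mp this with h | h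
      · exact absurd h hm1
      · exact h
    have hYfin : Y p₁ = (m':ℝ) • p₁ := by
      have := hYp₁
      rw [hb0, zero_smul, sub_eq_zero] at this
      exact this
    -- M p₁ is an eigenvector in S of eigenvalue m'+2, hence 0
    have hYMp₁ : Y (M p₁) = ((m':ℝ)+2) • M p₁ := by
      have := congrArg (fun A : Module.End ℝ V => A p₁) eYM
      simp only [Module.End.mul_apply, LinearMap.add_apply, LinearMap.smul_apply] at this
      rw [hYfin, map_smul] at this
      rw [this, add_smul]
    have hM0 : M p₁ = 0 := by
      apply stringS_eig_zero eYN eMN hp hMp hYp hMp₁S hYMp₁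
      intro i heq
      have hi : (0:ℝ) ≤ ((i:ℕ):ℝ) := by positivity
      linarith
    exact ⟨p₁, hM0, hYfin, hp₁S⟩
  · -- m' ≠ m : Casimir correction
    have hCapp : ∀ x : V, ((2:ℝ)•(M*N) + (2:ℝ)•(N*M) + Y*Y) x
        = (2:ℝ) • M (N x) + (2:ℝ) • N (M x) + Y (Y x) := by
      intro x
      simp [LinearMap.add_apply, LinearMap.smul_apply, Module.End.mul_apply]
    have hcc : ((m:ℝ)^2 + 2*m) - ((m':ℝ)^2 + 2*m') ≠ 0 := by
      intro h
      have h' : ((m:ℝ) - m') * ((m:ℝ) + m' + 2) = 0 := by linear_combination h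
      rcases mul_eq_zero.mp h' with h'' | h''
      · have : (m:ℝ) = m' := by linarith
        exact hmm (by exact_mod_cast this.symm)
      · have h₁ : (0:ℝ) ≤ (m:ℝ) := by positivity
        have h₂ : (0:ℝ) ≤ (m':ℝ) := by positivity
        linarith
    set Ca : Module.End ℝ V := (2:ℝ)•(M*N) + (2:ℝ)•(N*M) + Y*Y with hCa
    set s₂ : V := Y p₀ - (m':ℝ) • p₀ with hs₂
    have hYp₀ : Y p₀ = (m':ℝ) • p₀ + s₂ := by rw [hs₂]; abel
    have hMNp₀ : M (N p₀) = N (M p₀) + Y p₀ := by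
      have := congrArg (fun A : Module.End ℝ V => A p₀) eMN
      simpa [Module.End.mul_apply, LinearMap.add_apply] using this
    have hCp₀ : Ca p₀ = ((m':ℝ)^2 + 2*m') • p₀
        + ((4:ℝ)•(N (M p₀)) + ((2:ℝ)+(m':ℝ))•s₂ + Y s₂) := by
      rw [hCa, hCapp, hMNp₀, hYp₀, map_add, map_smul, hYp₀]
      module
    set s₃ : V := (4:ℝ)•(N (M p₀)) + ((2:ℝ)+(m':ℝ))•s₂ + Y s₂ with hs₃
    have hs₃S : s₃ ∈ stringS N p m := by
      refine add_mem (add_mem (smul_mem _ _ (mem_comap.mp (hSN h0))) (smul_mem _ _ h1)) ?_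
      exact mem_comap.mp (hSY h1)
    set t : ℝ := (((m:ℝ)^2 + 2*m) - ((m':ℝ)^2 + 2*m'))⁻¹ with ht
    set q : V := p₀ - t • s₃ with hq
    have hqS : q - p₀ ∈ stringS N p m := by
      rw [hq]
      have : p₀ - t • s₃ - p₀ = -(t • s₃) := by abel
      rw [this]
      exact neg_mem (smul_mem _ _ hs₃S)
    have hCq : Ca q = ((m':ℝ)^2 + 2*m') • q := by
      have hCs₃ : Ca s₃ = ((m:ℝ)^2 + 2*m) • s₃ := hcas _ hs₃S
      have hsc : (1:ℝ) + t * ((m':ℝ)^2 + 2*m') - t * ((m:ℝ)^2 + 2*m) = 0 := by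
        rw [ht]
        linear_combination -(inv_mul_cancel₀ hcc)
      rw [hq, map_sub, map_smul, hCs₃, hCp₀]
      linear_combination (norm := module) hsc • s₃
    -- commutation of Ca with M, Y
    have hCaM : ∀ x : V, Ca (M x) = M (Ca x) := by
      intro x
      have h := congrArg (fun A : Module.End ℝ V => A x) (CasM eYM eYN eMN)
      rw [← hCa] at h
      simpa only [Module.End.mul_apply] using h
    have hCaY : ∀ x : V, Ca (Y x) = Y (Ca x) := by
      intro x
      have h := congrArg (fun A : Module.End ℝ V => A x) (CasY eYM eYN eMN)
      rw [← hCa] at h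
      simpa only [Module.End.mul_apply] using h
    -- M q = 0
    have hMq : M q = 0 := by
      have hMqS : M q ∈ stringS N p m := by
        rw [hq, map_sub, map_smul]
        exact sub_mem h0 (smul_mem _ _ (mem_comap.mp (hSM hs₃S)))
      have e1 : Ca (M q) = ((m:ℝ)^2 + 2*m) • M q := hcas _ hMqS
      have e2 : Ca (M q) = ((m':ℝ)^2 + 2*m') • M q := by
        rw [hCaM, hCq, map_smul]
      have e3 : (((m:ℝ)^2 + 2*m) - ((m':ℝ)^2 + 2*m')) • M q = 0 := by
        rw [sub_smul, ← e1, ← e2, sub_self]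
      exact (smul_eq_zero.mp e3).resolve_left hcc
    -- Y q = m' q
    have hYq : Y q = (m':ℝ) • q := by
      have hw : Y q - (m':ℝ) • q ∈ stringS N p m := by
        have : Y q - (m':ℝ) • q = s₂ - t • (Y s₃ - (m':ℝ) • s₃) := by
          rw [hq, map_sub, map_smul, hYp₀]
          module
        rw [this]
        refine sub_mem h1 (smul_mem _ _ (sub_mem ?_ (smul_mem _ _ hs₃S)))
        exact mem_comap.mp (hSY hs₃S)
      have e1 : Ca (Y q - (m':ℝ) • q) = ((m:ℝ)^2 + 2*m) • (Y q - (m':ℝ) • q) := hcas _ hw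
      have e2 : Ca (Y q - (m':ℝ) • q) = ((m':ℝ)^2 + 2*m') • (Y q - (m':ℝ) • q) := by
        rw [map_sub, map_smul, hCaY, hCq, map_smul]
        module
      have e3 : (((m:ℝ)^2 + 2*m) - ((m':ℝ)^2 + 2*m')) • (Y q - (m':ℝ) • q) = 0 := by
        rw [sub_smul, ← e1, ← e2, sub_self]
      have := (smul_eq_zero.mp e3).resolve_left hcc
      rwa [sub_eq_zero] at this
    exact ⟨q, hMq, hYq, hqS⟩

end stringS

end applied

/-- Vectors lying on strings through primitive vectors of natural weight. -/
def genSet (M Y N : Module.End ℝ V) : Set V :=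
  {x | ∃ (mm j : ℕ) (q : V), M q = 0 ∧ Y q = (mm:ℝ) • q ∧ x = (N ^ j) q}

universe u

theorem span_genSet_eq_top : ∀ (d : ℕ), ∀ (V : Type u) [AddCommGroup V] [Module ℝ V]
    [FiniteDimensional ℝ V], ∀ (M Y N : Module.End ℝ V),
    (Y * M = M * Y + (2:ℝ) • M) → (Y * N = N * Y - (2:ℝ) • N) → (M * N = N * M + Y) →
    finrank ℝ V ≤ d → Submodule.span ℝ (genSet M Y N) = ⊤ := by
  intro d
  induction d with
  | zero =>
    intro V iAG iMod iFD M Y N eYM eYN eMN hd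
    have h0 : finrank ℝ V = 0 := Nat.le_zero.mp hd
    have hss : Subsingleton V := finrank_zero_iff.mp h0
    rw [eq_top_iff]
    intro x _
    rw [Subsingleton.elim x 0]
    exact zero_mem _
  | succ d ih =>
    intro V iAG iMod iFD M Y N eYM eYN eMN hd
    rcases subsingleton_or_nontrivial V with hss | hnt
    · rw [eq_top_iff]
      intro x _
      rw [Subsingleton.elim x 0]
      exact zero_mem _
    · obtain ⟨m, p, hp, hMp, hYp⟩ := exists_primitive eYM eYN eMN
      set S := stringS N p m with hSdef
      have hSM : S ≤ S.comap M := stringS_comap_M eYN eMN hp hMp hYp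
      have hSY : S ≤ S.comap Y := stringS_comap_Y eYN eMN hp hMp hYp
      have hSN : S ≤ S.comap N := stringS_comap_N eYN eMN hp hMp hYp
      have hpS : p ∈ S := by
        apply subset_span
        exact ⟨(0 : Fin (m+1)), by simp⟩
      have hSbot : S ≠ ⊥ := fun h => hp (by rw [h] at hpS; simpa using hpS)
      have hrank : finrank ℝ (V ⧸ S) ≤ d := by
        have h1 := S.finrank_quotient_add_finrank
        have h2 : 0 < finrank ℝ S := Module.finrank_pos_iff.mpr
          (Submodule.nontrivial_iff_ne_bot.mpr hSbot)
        omega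
      set M' := Submodule.mapQ S S M hSM with hM'def
      set Y' := Submodule.mapQ S S Y hSY with hY'def
      set N' := Submodule.mapQ S S N hSN with hN'def
      have happM : ∀ x : V, M' (S.mkQ x) = S.mkQ (M x) := fun x => Submodule.mapQ_apply S S M x
      have happY : ∀ x : V, Y' (S.mkQ x) = S.mkQ (Y x) := fun x => Submodule.mapQ_apply S S Y x
      have happN : ∀ x : V, N' (S.mkQ x) = S.mkQ (N x) := fun x => Submodule.mapQ_apply S S N x
      have happNpow : ∀ (n : ℕ) (x : V), (N' ^ n) (S.mkQ x) = S.mkQ ((N ^ n) x) := by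
        intro n
        induction n with
        | zero => intro x; simp
        | succ n ihn =>
          intro x
          rw [pow_succ, Module.End.mul_apply, happN, ihn (N x), ← Module.End.mul_apply,
            ← pow_succ]
      have eYM' : Y' * M' = M' * Y' + (2:ℝ) • M' := by
        refine Submodule.linearMap_qext _ (LinearMap.ext fun x => ?_)
        simp only [LinearMap.comp_apply, Submodule.mkQ_apply, Module.End.mul_apply,
          LinearMap.add_apply, LinearMap.smul_apply]
        rw [show Submodule.Quotient.mk x = S.mkQ x from rfl, happM, happY, happY, happM,
          ← map_smul, ← map_add]
        congr 1
        have := congrArg (fun A : Module.End ℝ V => A x) eYM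
        simpa only [Module.End.mul_apply, LinearMap.add_apply, LinearMap.smul_apply] using this
      have eYN' : Y' * N' = N' * Y' - (2:ℝ) • N' := by
        refine Submodule.linearMap_qext _ (LinearMap.ext fun x => ?_)
        simp only [LinearMap.comp_apply, Submodule.mkQ_apply, Module.End.mul_apply,
          LinearMap.sub_apply, LinearMap.smul_apply]
        rw [show Submodule.Quotient.mk x = S.mkQ x from rfl, happN, happY, happY, happN,
          ← map_smul, ← map_sub]
        congr 1
        have := congrArg (fun A : Module.End ℝ V => A x) eYN
        simpa only [Module.End.mul_apply, LinearMap.sub_apply, LinearMap.smul_apply] using this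
      have eMN' : M' * N' = N' * M' + Y' := by
        refine Submodule.linearMap_qext _ (LinearMap.ext fun x => ?_)
        simp only [LinearMap.comp_apply, Submodule.mkQ_apply, Module.End.mul_apply,
          LinearMap.add_apply]
        rw [show Submodule.Quotient.mk x = S.mkQ x from rfl, happN, happM, happM, happN,
          happY, ← map_add]
        congr 1
        have := congrArg (fun A : Module.End ℝ V => A x) eMN
        simpa only [Module.End.mul_apply, LinearMap.add_apply] using this
      have IH := ih (V ⧸ S) M' Y' N' eYM' eYN' eMN' hrank
      -- genSet of the quotient is contained in the image of span genSet
      have hsub : genSet M' Y' N' ⊆ ↑((Submodule.span ℝ (genSet M Y N)).map S.mkQ) := by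
        rintro _ ⟨mm, j, qb, hM'q, hY'q, rfl⟩
        obtain ⟨q₀, rfl⟩ := S.mkQ_surjective qb
        by_cases hq0 : S.mkQ q₀ = 0
        · refine ⟨0, zero_mem _, ?_⟩
          rw [hq0, map_zero, map_zero]
        · have hMq₀ : M q₀ ∈ S := by
            rw [← Submodule.Quotient.mk_eq_zero]
            rw [show Submodule.Quotient.mk (M q₀) = S.mkQ (M q₀) from rfl, ← happM]
            exact hM'q
          have hYq₀ : Y q₀ - (mm:ℝ) • q₀ ∈ S := by
            rw [← Submodule.Quotient.mk_eq_zero]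
            rw [show Submodule.Quotient.mk (Y q₀ - (mm:ℝ) • q₀)
              = S.mkQ (Y q₀ - (mm:ℝ) • q₀) from rfl]
            rw [map_sub, map_smul, ← happY, hY'q, sub_self]
          have hNq₀ : (N ^ (mm+1)) q₀ ∈ S := by
            have hq' := (string_facts eYN' eMN' hq0 hM'q hY'q).1
            rw [happNpow] at hq'
            rw [← Submodule.Quotient.mk_eq_zero]
            exact hq'
          obtain ⟨q, hMq, hYq, hqS⟩ :=
            lift_primitive eYM eYN eMN hp hMp hYp mm q₀ hMq₀ hYq₀ hNq₀
          refine ⟨(N ^ j) q, subset_span ⟨mm, j, q, hMq, hYq, rfl⟩, ?_⟩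
          have hmk : S.mkQ q = S.mkQ q₀ := by
            rw [← sub_eq_zero, ← map_sub]
            exact (Submodule.Quotient.mk_eq_zero _).mpr hqS
          rw [show S.mkQ ((N ^ j) q) = (N' ^ j) (S.mkQ q) from (happNpow j q).symm, hmk]
      have hSle : S ≤ Submodule.span ℝ (genSet M Y N) := by
        rw [hSdef, stringS, span_le]
        rintro _ ⟨i, rfl⟩
        exact subset_span ⟨m, (i:ℕ), p, hMp, hYp, rfl⟩
      rw [eq_top_iff]
      intro v _
      have hv : S.mkQ v ∈ Submodule.span ℝ (genSet M' Y' N') := by rw [IH]; trivial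
      have hv2 : S.mkQ v ∈ (Submodule.span ℝ (genSet M Y N)).map S.mkQ := by
        have := Submodule.span_le.mpr hsub
        exact this hv
      obtain ⟨w, hw, hwv⟩ := hv2
      have hvw : v - w ∈ S := by
        rw [← Submodule.Quotient.mk_eq_zero]
        rw [show Submodule.Quotient.mk (v - w) = S.mkQ (v - w) from rfl, map_sub, hwv, sub_self]
      have : v = w + (v - w) := by abel
      rw [this]
      exact add_mem hw (hSle hvw)

end QellAux

theorem Qell_nondegenerate_on_highest_weight_space
    (V : Type*) [AddCommGroup V] [Module ℝ V] [FiniteDimensional ℝ V]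
    (k : ℕ) (Q : V →ₗ[ℝ] V →ₗ[ℝ] ℝ)
    (hnondeg : ∀ u : V, (∀ v : V, Q u v = 0) → u = 0)
    (hsymm : ∀ u v : V, Q u v = (-1 : ℝ) ^ k * Q v u)
    (M Y N : Module.End ℝ V)
    (hMskew : ∀ u v : V, Q (M u) v = -Q u (M v))
    (hYskew : ∀ u v : V, Q (Y u) v = -Q u (Y v))
    (hNskew : ∀ u v : V, Q (N u) v = -Q u (N v))
    (h1 : ⁅Y, M⁆ = (2 : ℝ) • M)
    (h2 : ⁅Y, N⁆ = -((2 : ℝ) • N))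
    (h3 : ⁅M, N⁆ = Y)
    (ℓ : ℕ) :
    ∀ u ∈ LinearMap.ker M ⊓ Module.End.eigenspace Y (ℓ : ℝ),
      (∀ v ∈ LinearMap.ker M ⊓ Module.End.eigenspace Y (ℓ : ℝ),
        Q u ((N ^ ℓ) v) = 0) → u = 0 := by
  intro u hu hQu
  have eYM : Y * M = M * Y + (2:ℝ) • M := by
    rw [Ring.lie_def, sub_eq_iff_eq_add] at h1
    rw [h1]; abel
  have eYN : Y * N = N * Y - (2:ℝ) • N := by
    rw [Ring.lie_def, sub_eq_iff_eq_add] at h2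
    rw [h2]; abel
  have eMN : M * N = N * M + Y := by
    rw [Ring.lie_def, sub_eq_iff_eq_add] at h3
    rw [h3]; abel
  obtain ⟨huM, huY⟩ := Submodule.mem_inf.mp hu
  rw [LinearMap.mem_ker] at huM
  rw [Module.End.mem_eigenspace_iff] at huY
  by_cases hu0 : u = 0
  · exact hu0
  · apply hnondeg
    have hN1u : (N ^ (ℓ+1)) u = 0 := (QellAux.string_facts eYN eMN hu0 huM huY).1
    have hshift : ∀ (n : ℕ) (a w : V), Q a ((N ^ n) w) = ((-1:ℝ)^n) * Q ((N ^ n) a) w := by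
      intro n
      induction n with
      | zero => intro a w; simp
      | succ n ihn =>
        intro a w
        have h4 : ∀ x y : V, Q x (N y) = - Q (N x) y := fun x y => by
          rw [hNskew]; ring
        calc Q a ((N^(n+1)) w) = Q a ((N^n) (N w)) := by
              rw [pow_succ, Module.End.mul_apply]
        _ = ((-1:ℝ)^n) * Q ((N^n) a) (N w) := ihn a (N w)
        _ = ((-1:ℝ)^n) * (- Q (N ((N^n) a)) w) := by rw [h4]
        _ = ((-1:ℝ)^(n+1)) * Q ((N^(n+1)) a) w := by
              rw [show N ((N^n) a) = (N^(n+1)) a from by rw [pow_succ', Module.End.mul_apply]]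
              ring
    have hspan := QellAux.span_genSet_eq_top (finrank ℝ V) V M Y N eYM eYN eMN le_rfl
    intro x
    have hx : x ∈ Submodule.span ℝ (QellAux.genSet M Y N) := by rw [hspan]; trivial
    refine Submodule.span_induction (p := fun x _ => Q u x = 0) ?_ ?_ ?_ ?_ hx
    · rintro _ ⟨mm, j, q, hMq, hYq, rfl⟩
      by_cases hq0 : q = 0
      · simp [hq0]
      · by_cases heq : mm + ℓ = 2*j
        · rcases Nat.lt_trichotomy mm ℓ with hlt | hmme | hgt
          · -- mm < ℓ : the string is too short, N^j q = 0
            have hNq : (N^(mm+1)) q = 0 := (QellAux.string_facts eYN eMN hq0 hMq hYq).1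
            have hj : j = (j - (mm+1)) + (mm+1) := by omega
            rw [hj, pow_add, Module.End.mul_apply, hNq, map_zero, map_zero]
          · -- mm = ℓ : use the radical hypothesis
            have hj : j = ℓ := by omega
            have hYq' : Y q = (ℓ:ℝ) • q := by rw [hYq, hmme]
            rw [hj]
            exact hQu q (Submodule.mem_inf.mpr ⟨LinearMap.mem_ker.mpr hMq,
              Module.End.mem_eigenspace_iff.mpr hYq'⟩)
          · -- mm > ℓ : move N across, N^(ℓ+1) u = 0
            have hj : j = (ℓ+1) + (j - (ℓ+1)) := by omega
            rw [hj, pow_add, Module.End.mul_apply, hshift (ℓ+1) u, hN1u]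
            simp
        · -- weights do not match : eigenvalue argument
          have hYx : Y ((N^j) q) = ((mm:ℝ) - 2*j) • (N^j) q := QellAux.F1 eYN hYq j
          have h5 : Q (Y u) ((N^j) q) = - Q u (Y ((N^j) q)) := hYskew u _
          rw [huY, hYx] at h5
          simp only [map_smul, LinearMap.smul_apply, smul_eq_mul] at h5
          have hco : (((ℓ:ℝ)) + ((mm:ℝ) - 2*j)) * Q u ((N^j) q) = 0 := by
            linear_combination h5
          have hcoeff : (((ℓ:ℝ)) + ((mm:ℝ) - 2*j)) ≠ 0 := by
            intro hcc
            apply heq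
            have hr : ((mm:ℝ)) + (ℓ:ℝ) = 2*(j:ℝ) := by linarith
            exact_mod_cast hr
          exact (mul_eq_zero.mp hco).resolve_left hcoeff
    · exact map_zero _
    · intro x y _ _ hpx hpy
      rw [map_add, hpx, hpy, add_zero]
    · intro a x _ hpx
      rw [map_smul, hpx, smul_zero]
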